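/- Let (F, d_Q, ω) and (F̃, d̃_Q, ω̃) be degree-k Poincaré complexes. Suppose f : F → F̃ and g : F̃ → F are chain maps, and H : F^• → F^{•−1}, H̃ : F̃^• → F̃^{•−1} are linear maps of degree −1 satisfying the chain homotopy relations d_Q H + H d_Q = id_F − g∘f and d̃_Q H̃ + H̃ d̃_Q = id_{F̃} − f∘g. Assume moreover that f preserves the pairings: ω̃(f(x), f(y)) = ω(x, y) for all x, y ∈ F. Define a degree-(k−1) bilinear form β̃ on F̃ by setting, for homogeneous x̃, ỹ ∈ F̃, β̃(x̃, ỹ) = (−1)^{k+1} [ ( ω̃(H̃ x̃, ỹ) + (−1)^{|x̃|+1} ω̃(x̃, H̃ ỹ) ) + (1/2)( −ω̃(H̃ x̃, H̃ d̃_Q ỹ) + (−1)^{|x̃|} ω̃(H̃ d̃_Q x̃, H̃ ỹ) ) − ω̃(H̃ x̃, d̃_Q H̃ ỹ) ]. Then for all homogeneous x̃, ỹ ∈ F̃ one has ω(g(x̃), g(ỹ)) = ω̃(x̃, ỹ) + (−1)^{k} ( β̃(d̃_Q x̃, ỹ) + (−1)^{|x̃|+1} β̃(x̃, d̃_Q ỹ)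 ). -/
import Mathlib


/-- Let `(F, d, ω)` and `(Ft, dt, ωt)` be degree-`k` Poincaré complexes (ℤ-graded real cochain
complexes with a graded skew-symmetric nondegenerate pairing `ω : F^i ⊗ F^{-i-k} → ℝ`
compatible with the differential).  Suppose `f, g` are chain maps with chain homotopies
`H, Ht` witnessing `g∘f ≃ id` and `f∘g ≃ id`, and `f` preserves the pairings.  Define the
degree-`(k-1)` bilinear form `βt` by the explicit formula of Lemma 1.5.  Then
`ω(g x, g y) = ωt(x, y) + (L_Q βt)(x, y)`. -/
theorem fiber_product_weak_equivalence_symplectic_correction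
    (k : ℤ)
    (F : ℤ → Type*) [∀ i, AddCommGroup (F i)] [∀ i, Module ℝ (F i)]
    (Ft : ℤ → Type*) [∀ i, AddCommGroup (Ft i)] [∀ i, Module ℝ (Ft i)]
    -- the differentials (degree +1, squaring to zero)
    (d : ∀ i j : ℤ, j = i + 1 → (F i →ₗ[ℝ] F j))
    (dt : ∀ i j : ℤ, j = i + 1 → (Ft i →ₗ[ℝ] Ft j))
    (hd2 : ∀ i (x : F i), d (i+1) (i+2) (by omega) (d i (i+1) rfl x) = 0)
    (hdt2 : ∀ i (x : Ft i), dt (i+1) (i+2) (by omega) (dt i (i+1) rfl x) = 0)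
    -- the degree-k pairings
    (ω : ∀ i j : ℤ, i + j = -k → (F i →ₗ[ℝ] F j →ₗ[ℝ] ℝ))
    (ωt : ∀ i j : ℤ, i + j = -k → (Ft i →ₗ[ℝ] Ft j →ₗ[ℝ] ℝ))
    -- graded skew-symmetry
    (hω_skew : ∀ i j (h : i + j = -k) (h' : j + i = -k) (x : F i) (y : F j),
        ω i j h x y = -((-1 : ℝ) ^ (i * j)) * ω j i h' y x)
    (hωt_skew : ∀ i j (h : i + j = -k) (h' : j + i = -k) (x : Ft i) (y : Ft j),
        ωt i j h x y = -((-1 : ℝ) ^ (i * j)) * ωt j i h' y x)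
    -- nondegeneracy
    (hω_nondeg : ∀ i j (h : i + j = -k) (x : F i),
        (∀ y : F j, ω i j h x y = 0) → x = 0)
    (hωt_nondeg : ∀ i j (h : i + j = -k) (x : Ft i),
        (∀ y : Ft j, ωt i j h x y = 0) → x = 0)
    -- compatibility with the differential:  ω(d x, y) = (-1)^{|x|} ω(x, d y)
    (hω_d : ∀ i j (h : i + 1 + j = -k) (h' : i + (j + 1) = -k) (x : F i) (y : F j),
        ω (i+1) j h (d i (i+1) rfl x) y = (-1 : ℝ) ^ i * ω i (j+1) h' x (d j (j+1) rfl y))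
    (hωt_d : ∀ i j (h : i + 1 + j = -k) (h' : i + (j + 1) = -k) (x : Ft i) (y : Ft j),
        ωt (i+1) j h (dt i (i+1) rfl x) y = (-1 : ℝ) ^ i * ωt i (j+1) h' x (dt j (j+1) rfl y))
    -- chain maps f, g
    (f : ∀ i, F i →ₗ[ℝ] Ft i) (g : ∀ i, Ft i →ₗ[ℝ] F i)
    (hf : ∀ i (x : F i), f (i+1) (d i (i+1) rfl x) = dt i (i+1) rfl (f i x))
    (hg : ∀ i (x : Ft i), g (i+1) (dt i (i+1) rfl x) = d i (i+1) rfl (g i x))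
    -- chain homotopies:  dH + Hd = id - g f  and  dt Ht + Ht dt = id - f g
    (H : ∀ i j : ℤ, j = i - 1 → (F i →ₗ[ℝ] F j))
    (Ht : ∀ i j : ℤ, j = i - 1 → (Ft i →ₗ[ℝ] Ft j))
    (hH : ∀ i (x : F i),
        d (i-1) i (by omega) (H i (i-1) rfl x) + H (i+1) i (by omega) (d i (i+1) rfl x)
          = x - g i (f i x))
    (hHt : ∀ i (x : Ft i),
        dt (i-1) i (by omega) (Ht i (i-1) rfl x) + Ht (i+1) i (by omega) (dt i (i+1) rfl x)
          = x - f i (g i x))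
    -- f preserves the pairings:  ωt(f x, f y) = ω(x, y)
    (hfω : ∀ i j (h : i + j = -k) (x : F i) (y : F j),
        ωt i j h (f i x) (f j y) = ω i j h x y)
    -- the degree-(k-1) bilinear form βt defined by the explicit formula
    (βt : ∀ i j : ℤ, i + j = 1 - k → (Ft i →ₗ[ℝ] Ft j →ₗ[ℝ] ℝ))
    (hβ : ∀ i j (h : i + j = 1 - k) (x : Ft i) (y : Ft j),
        βt i j h x y = (-1 : ℝ) ^ (k+1) *
          ( ( ωt (i-1) j (by omega) (Ht i (i-1) rfl x) y
              + (-1 : ℝ) ^ (i+1) * ωt i (j-1) (by omega) x (Ht j (j-1) rfl y) )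
            + (1/2) *
              ( - ωt (i-1) j (by omega) (Ht i (i-1) rfl x)
                    (Ht (j+1) j (by omega) (dt j (j+1) rfl y))
                + (-1 : ℝ) ^ i * ωt i (j-1) (by omega)
                    (Ht (i+1) i (by omega) (dt i (i+1) rfl x)) (Ht j (j-1) rfl y) )
            - ωt (i-1) j (by omega) (Ht i (i-1) rfl x)
                (dt (j-1) j (by omega) (Ht j (j-1) rfl y)) )) :
    -- conclusion:  ω(g x, g y) = ωt(x, y) + (L_Q βt)(x, y)
    ∀ a b (h : a + b = -k) (x : Ft a) (y : Ft b),
      ω a b h (g a x) (g b y)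
        = ωt a b h x y + (-1 : ℝ) ^ k *
            ( βt (a+1) b (by omega) (dt a (a+1) rfl x) y
              + (-1 : ℝ) ^ (a+1) * βt a (b+1) (by omega) x (dt b (b+1) rfl y) ) := by

  intro a b hab x y
  have hne : (-1:ℝ) ≠ 0 := by norm_num
  -- congruence helpers
  have wtc : ∀ (i i' j j' : ℤ) (hi : i = i') (hj : j = j')
      (p : i + j = -k) (p' : i' + j' = -k)
      (u : Ft i) (u' : Ft i') (v : Ft j) (v' : Ft j'),
      HEq u u' → HEq v v' → ωt i j p u v = ωt i' j' p' u' v' := by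
    intro i i' j j' hi hj p p' u u' v v' hu hv
    subst hi; subst hj
    cases eq_of_heq hu; cases eq_of_heq hv; rfl
  have dtc : ∀ (i i' j j' : ℤ) (hi : i = i') (hj : j = j')
      (p : j = i + 1) (p' : j' = i' + 1) (u : Ft i) (u' : Ft i'),
      HEq u u' → HEq (dt i j p u) (dt i' j' p' u') := by
    intro i i' j j' hi hj p p' u u' hu
    subst hi; subst hj; cases eq_of_heq hu; exact HEq.rfl
  have Htc : ∀ (i i' j j' : ℤ) (hi : i = i') (hj : j = j')
      (p : j = i - 1) (p' : j' = i' - 1) (u : Ft i) (u' : Ft i'),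
      HEq u u' → HEq (Ht i j p u) (Ht i' j' p' u') := by
    intro i i' j j' hi hj p p' u u' hu
    subst hi; subst hj; cases eq_of_heq hu; exact HEq.rfl
  have hdt2' : ∀ (i j l : ℤ) (p : j = i+1) (q : l = j+1) (u : Ft i),
      dt j l q (dt i j p u) = 0 := by
    intro i j l p q u
    subst p
    have hl : l = i + 2 := by omega
    subst hl
    exact hdt2 i u
  -- rewrite LHS through f
  rw [← hfω a b hab (g a x) (g b y)]
  have hgx : x - (dt (a-1) a (by omega) (Ht a (a-1) rfl x)
      + Ht (a+1) a (by omega) (dt a (a+1) rfl x)) = f a (g a x) := by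
    rw [hHt a x]; abel
  have hgy : y - (dt (b-1) b (by omega) (Ht b (b-1) rfl y)
      + Ht (b+1) b (by omega) (dt b (b+1) rfl y)) = f b (g b y) := by
    rw [hHt b y]; abel
  rw [← hgx, ← hgy, hβ, hβ]
  rw [hdt2' a (a+1) (a+1+1) rfl rfl x, hdt2' b (b+1) (b+1+1) rfl rfl y]
  simp only [map_zero, LinearMap.zero_apply, map_sub, map_add,
    LinearMap.sub_apply, LinearMap.add_apply]
  -- bridging equalities to canonical atoms
  have E1 : ωt (a+1-1) b (by omega) (Ht (a+1) (a+1-1) rfl (dt a (a+1) rfl x)) y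
      = ωt a b hab (Ht (a+1) a (by omega) (dt a (a+1) rfl x)) y :=
    wtc (a+1-1) a b b (by omega) rfl (by omega) hab _ _ y y
      (Htc (a+1) (a+1) (a+1-1) a rfl (by omega) rfl (by omega) _ _ HEq.rfl) HEq.rfl
  have E2 : ωt (a+1-1) b (by omega) (Ht (a+1) (a+1-1) rfl (dt a (a+1) rfl x))
        (Ht (b+1) b (by omega) (dt b (b+1) rfl y))
      = ωt a b hab (Ht (a+1) a (by omega) (dt a (a+1) rfl x))
        (Ht (b+1) b (by omega) (dt b (b+1) rfl y)) :=
    wtc (a+1-1) a b b (by omega) rfl (by omega) hab _ _ _ _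
      (Htc (a+1) (a+1) (a+1-1) a rfl (by omega) rfl (by omega) _ _ HEq.rfl) HEq.rfl
  have E3 : ωt (a+1-1) b (by omega) (Ht (a+1) (a+1-1) rfl (dt a (a+1) rfl x))
        (dt (b-1) b (by omega) (Ht b (b-1) rfl y))
      = ωt a b hab (Ht (a+1) a (by omega) (dt a (a+1) rfl x))
        (dt (b-1) b (by omega) (Ht b (b-1) rfl y)) :=
    wtc (a+1-1) a b b (by omega) rfl (by omega) hab _ _ _ _
      (Htc (a+1) (a+1) (a+1-1) a rfl (by omega) rfl (by omega) _ _ HEq.rfl) HEq.rfl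
  have E4 : ωt a (b+1-1) (by omega) x (Ht (b+1) (b+1-1) rfl (dt b (b+1) rfl y))
      = ωt a b hab x (Ht (b+1) b (by omega) (dt b (b+1) rfl y)) :=
    wtc a a (b+1-1) b rfl (by omega) (by omega) hab x x _ _ HEq.rfl
      (Htc (b+1) (b+1) (b+1-1) b rfl (by omega) rfl (by omega) _ _ HEq.rfl)
  have E5 : ωt a (b+1-1) (by omega) (Ht (a+1) a (by omega) (dt a (a+1) rfl x))
        (Ht (b+1) (b+1-1) rfl (dt b (b+1) rfl y))
      = ωt a b hab (Ht (a+1) a (by omega) (dt a (a+1) rfl x))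
        (Ht (b+1) b (by omega) (dt b (b+1) rfl y)) :=
    wtc a a (b+1-1) b rfl (by omega) (by omega) hab _ _ _ _ HEq.rfl
      (Htc (b+1) (b+1) (b+1-1) b rfl (by omega) rfl (by omega) _ _ HEq.rfl)
  have E6 : ωt (a-1) (b+1) (by omega) (Ht a (a-1) rfl x)
        (dt (b+1-1) (b+1) (by omega) (Ht (b+1) (b+1-1) rfl (dt b (b+1) rfl y)))
      = ωt (a-1) (b+1) (by omega) (Ht a (a-1) rfl x)
        (dt b (b+1) rfl (Ht (b+1) b (by omega) (dt b (b+1) rfl y))) :=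
    wtc (a-1) (a-1) (b+1) (b+1) rfl rfl (by omega) (by omega) _ _ _ _ HEq.rfl
      (dtc (b+1-1) b (b+1) (b+1) (by omega) rfl (by omega) rfl _ _
        (Htc (b+1) (b+1) (b+1-1) b rfl (by omega) rfl (by omega) _ _ HEq.rfl))
  -- relations from compatibility with the differential
  have R1 : ωt a b hab (dt (a-1) a (by omega) (Ht a (a-1) rfl x)) y
      = (-1:ℝ)^(a-1) * ωt (a-1) (b+1) (by omega) (Ht a (a-1) rfl x) (dt b (b+1) rfl y) := by
    calc ωt a b hab (dt (a-1) a (by omega) (Ht a (a-1) rfl x)) y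
        = ωt (a-1+1) b (by omega) (dt (a-1) (a-1+1) rfl (Ht a (a-1) rfl x)) y :=
          wtc a (a-1+1) b b (by omega) rfl hab (by omega) _ _ y y
            (dtc (a-1) (a-1) a (a-1+1) rfl (by omega) (by omega) rfl _ _ HEq.rfl) HEq.rfl
      _ = _ := hωt_d (a-1) b (by omega) (by omega) (Ht a (a-1) rfl x) y
  have R2 : ωt (a+1) (b-1) (by omega) (dt a (a+1) rfl x) (Ht b (b-1) rfl y)
      = (-1:ℝ)^a * ωt a b hab x (dt (b-1) b (by omega) (Ht b (b-1) rfl y)) := by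
    calc ωt (a+1) (b-1) (by omega) (dt a (a+1) rfl x) (Ht b (b-1) rfl y)
        = (-1:ℝ)^a * ωt a (b-1+1) (by omega) x (dt (b-1) (b-1+1) rfl (Ht b (b-1) rfl y)) :=
          hωt_d a (b-1) (by omega) (by omega) x (Ht b (b-1) rfl y)
      _ = (-1:ℝ)^a * ωt a b hab x (dt (b-1) b (by omega) (Ht b (b-1) rfl y)) := by
          rw [wtc a a (b-1+1) b rfl (by omega) (by omega) hab x x _ _ HEq.rfl
            (dtc (b-1) (b-1) (b-1+1) b rfl (by omega) rfl (by omega) _ _ HEq.rfl)]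
  have R3 : ωt a b hab (dt (a-1) a (by omega) (Ht a (a-1) rfl x))
        (dt (b-1) b (by omega) (Ht b (b-1) rfl y)) = 0 := by
    have hz : dt b (b+1) rfl (dt (b-1) b (by omega) (Ht b (b-1) rfl y)) = 0 :=
      hdt2' (b-1) b (b+1) (by omega) rfl (Ht b (b-1) rfl y)
    calc ωt a b hab (dt (a-1) a (by omega) (Ht a (a-1) rfl x))
          (dt (b-1) b (by omega) (Ht b (b-1) rfl y))
        = ωt (a-1+1) b (by omega) (dt (a-1) (a-1+1) rfl (Ht a (a-1) rfl x))
          (dt (b-1) b (by omega) (Ht b (b-1) rfl y)) :=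
          wtc a (a-1+1) b b (by omega) rfl hab (by omega) _ _ _ _
            (dtc (a-1) (a-1) a (a-1+1) rfl (by omega) (by omega) rfl _ _ HEq.rfl) HEq.rfl
      _ = (-1:ℝ)^(a-1) * ωt (a-1) (b+1) (by omega) (Ht a (a-1) rfl x)
          (dt b (b+1) rfl (dt (b-1) b (by omega) (Ht b (b-1) rfl y))) :=
          hωt_d (a-1) b (by omega) (by omega) (Ht a (a-1) rfl x)
            (dt (b-1) b (by omega) (Ht b (b-1) rfl y))
      _ = 0 := by rw [hz]; simp
  have R4 : ωt a b hab (dt (a-1) a (by omega) (Ht a (a-1) rfl x))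
        (Ht (b+1) b (by omega) (dt b (b+1) rfl y))
      = (-1:ℝ)^(a-1) * ωt (a-1) (b+1) (by omega) (Ht a (a-1) rfl x)
        (dt b (b+1) rfl (Ht (b+1) b (by omega) (dt b (b+1) rfl y))) := by
    calc ωt a b hab (dt (a-1) a (by omega) (Ht a (a-1) rfl x))
          (Ht (b+1) b (by omega) (dt b (b+1) rfl y))
        = ωt (a-1+1) b (by omega) (dt (a-1) (a-1+1) rfl (Ht a (a-1) rfl x))
          (Ht (b+1) b (by omega) (dt b (b+1) rfl y)) :=
          wtc a (a-1+1) b b (by omega) rfl hab (by omega) _ _ _ _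
            (dtc (a-1) (a-1) a (a-1+1) rfl (by omega) (by omega) rfl _ _ HEq.rfl) HEq.rfl
      _ = _ := hωt_d (a-1) b (by omega) (by omega) (Ht a (a-1) rfl x)
            (Ht (b+1) b (by omega) (dt b (b+1) rfl y))
  rw [E1, E2, E3, E4, E5, E6, R1, R2, R3, R4]
  -- normalize signs
  have p1 : (-1:ℝ)^(k+1) = -(-1:ℝ)^k := by rw [zpow_add₀ hne, zpow_one]; ring
  have p2 : (-1:ℝ)^(a+1) = -(-1:ℝ)^a := by rw [zpow_add₀ hne, zpow_one]; ring
  have p3 : (-1:ℝ)^(a+1+1) = (-1:ℝ)^a := by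
    rw [zpow_add₀ hne, zpow_add₀ hne, zpow_one]; ring
  have p4 : (-1:ℝ)^(a-1) = -(-1:ℝ)^a := by rw [zpow_sub₀ hne, zpow_one]; ring
  simp only [p1, p2, p3, p4]
  rcases Int.even_or_odd a with ha | ha <;> rcases Int.even_or_odd k with hk | hk <;>
    simp only [ha.neg_one_zpow, hk.neg_one_zpow] <;> ring
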